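/- Let λ > 0, P̄ > 0 and N0 > 0 be real numbers, and set N = λ·P̄/(4π·N0). Then 2π · ∫_0^{1/λ} s · log( 1 + (P̄/N0) · (λ/(4π)) · (1/λ² − s²)^{−1/2} ) ds = π · [ log(1 + λN)/λ² + N²·log( Nλ/(1 + Nλ) ) + N/λ ]. -/

import Mathlib

open Real MeasureTheory Set intervalIntegral

set_option maxHeartbeats 1000000


set_option maxHeartbeats 1000000

lemma abs_log_le (u : ℝ) (hu : 0 < u) : |Real.log u| ≤ 2 * u ^ (-(1:ℝ)/2) + u := by
  have h1 : Real.log u ≤ u := (Real.log_le_sub_one_of_pos hu).trans (by linarith)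
  have h2 : -Real.log u ≤ 2 * u ^ (-(1:ℝ)/2) := by
    have hup : 0 < u ^ (-(1:ℝ)/2) := Real.rpow_pos_of_pos hu _
    have := Real.log_le_sub_one_of_pos hup
    rw [Real.log_rpow hu] at this
    nlinarith
  have hup : 0 < u ^ (-(1:ℝ)/2) := Real.rpow_pos_of_pos hu _
  rw [abs_le]; constructor <;> nlinarith

lemma aux_integrable (a N : ℝ) (ha : 0 < a) (hN : 0 < N) :
    IntervalIntegrable (fun s => s * Real.log (1 + N * (a ^ 2 - s ^ 2) ^ (-(1:ℝ)/2)))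
      volume 0 a := by
  set C1 : ℝ := a * |Real.log (a + N)| + a * a with hC1
  set C2 : ℝ := 2 * a * a ^ (-(1:ℝ)/4) with hC2
  have hbint : IntervalIntegrable (fun s => C1 + C2 * (a - s) ^ (-(1:ℝ)/4)) volume 0 a := by
    apply IntervalIntegrable.add intervalIntegrable_const
    apply IntervalIntegrable.const_mul
    have h0 : IntervalIntegrable (fun x : ℝ => x ^ (-(1:ℝ)/4)) volume a 0 :=
      intervalIntegral.intervalIntegrable_rpow' (by norm_num)
    simpa using h0.comp_sub_left a
  apply hbint.mono_fun' (by apply Measurable.aestronglyMeasurable; measurability)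
  rw [Filter.EventuallyLE, ae_restrict_iff' measurableSet_uIoc]
  apply Filter.Eventually.of_forall
  intro s hs
  rw [Set.uIoc_of_le ha.le] at hs
  obtain ⟨hs0, hsa⟩ := hs
  rcases eq_or_lt_of_le hsa with h | h
  · have h1 : (a ^ 2 - s ^ 2 : ℝ) = 0 := by rw [h]; ring
    have h2 : (a - s : ℝ) = 0 := by rw [h]; ring
    rw [h1, h2, Real.zero_rpow (by norm_num), Real.zero_rpow (by norm_num)]
    simp only [mul_zero, add_zero, Real.log_one, mul_zero, norm_zero]
    positivity
  -- now 0 < s < a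
  have hq : 0 < a ^ 2 - s ^ 2 := by nlinarith
  set q := a ^ 2 - s ^ 2 with hqdef
  set u := Real.sqrt q with hudef
  have hu : 0 < u := Real.sqrt_pos.2 hq
  have hqu : q ^ (-(1:ℝ)/2) = u⁻¹ := by
    rw [hudef, Real.sqrt_eq_rpow, neg_div, Real.rpow_neg hq.le]
  have harg : 1 + N * q ^ (-(1:ℝ)/2) = (u + N) / u := by
    rw [hqu]; field_simp
  have hlogeq : Real.log (1 + N * q ^ (-(1:ℝ)/2)) = Real.log (u + N) - Real.log u := by
    rw [harg, Real.log_div (by positivity) (ne_of_gt hu)]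
  have hlognn : 0 ≤ Real.log (u + N) - Real.log u := by
    have := Real.log_le_log hu (by linarith : u ≤ u + N)
    linarith
  have hua : u ≤ a := by
    rw [hudef]
    calc Real.sqrt q ≤ Real.sqrt (a ^ 2) := Real.sqrt_le_sqrt (by nlinarith)
    _ = a := by rw [Real.sqrt_sq ha.le]
  have key1 : Real.log (u + N) ≤ |Real.log (a + N)| :=
    (Real.log_le_log (by positivity) (by linarith)).trans (le_abs_self _)
  have key2 : -Real.log u ≤ 2 * u ^ (-(1:ℝ)/2) + u := by
    have h5 := abs_log_le u hu
    have h6 := neg_abs_le (Real.log u)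
    linarith
  have key3 : u ^ (-(1:ℝ)/2) ≤ a ^ (-(1:ℝ)/4) * (a - s) ^ (-(1:ℝ)/4) := by
    have hq14 : u ^ (-(1:ℝ)/2) = q ^ (-(1:ℝ)/4) := by
      rw [hudef, Real.sqrt_eq_rpow, ← Real.rpow_mul hq.le]; norm_num
    rw [hq14, ← Real.mul_rpow ha.le (by linarith : (0:ℝ) ≤ a - s)]
    have hb1 : 0 < a * (a - s) := by nlinarith
    have hb2 : a * (a - s) ≤ q := by rw [hqdef]; nlinarith
    exact Real.rpow_le_rpow_of_nonpos hb1 hb2 (by norm_num)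
  have hnn : 0 ≤ s * Real.log (1 + N * q ^ (-(1:ℝ)/2)) := by
    rw [hlogeq]; positivity
  rw [Real.norm_eq_abs, abs_of_nonneg hnn, hlogeq]
  have hstep : s * (Real.log (u + N) - Real.log u) ≤ a * (Real.log (u + N) - Real.log u) :=
    mul_le_mul_of_nonneg_right (by linarith) hlognn
  have hstep2 : a * (Real.log (u + N) - Real.log u)
      ≤ a * (|Real.log (a + N)| + (2 * u ^ (-(1:ℝ)/2) + u)) := by
    apply mul_le_mul_of_nonneg_left _ ha.le
    linarith
  have hstep3 : a * (|Real.log (a + N)| + (2 * u ^ (-(1:ℝ)/2) + u))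
      ≤ C1 + C2 * (a - s) ^ (-(1:ℝ)/4) := by
    rw [hC1, hC2]
    have h7 : 2 * a * u ^ (-(1:ℝ)/2) ≤ 2 * a * (a ^ (-(1:ℝ)/4) * (a - s) ^ (-(1:ℝ)/4)) := by
      have := mul_le_mul_of_nonneg_left key3 (by positivity : (0:ℝ) ≤ 2 * a)
      linarith
    have h8 : a * u ≤ a * a := mul_le_mul_of_nonneg_left hua ha.le
    have h9 : 2 * a * (a ^ (-(1:ℝ)/4) * (a - s) ^ (-(1:ℝ)/4))
        = 2 * a * a ^ (-(1:ℝ)/4) * (a - s) ^ (-(1:ℝ)/4) := by ring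
    nlinarith
  linarith

lemma key_integral (a N : ℝ) (ha : 0 < a) (hN : 0 < N) :
    ∫ s in (0:ℝ)..a, s * Real.log (1 + N * (a ^ 2 - s ^ 2) ^ (-(1:ℝ)/2))
      = N^2/2 * Real.log N - (N^2 - a^2)/2 * Real.log (a + N)
        - a^2/2 * Real.log a + N*a/2 := by
  set G : ℝ → ℝ := fun s =>
      (N^2 + s^2 - a^2)/2 * Real.log (Real.sqrt (a^2 - s^2) + N)
      + (a^2 - s^2) * Real.log (a^2 - s^2) / 4
      - N/2 * Real.sqrt (a^2 - s^2) with hG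
  have hsqrtpos : ∀ x : ℝ, 0 < Real.sqrt (a^2 - x^2) + N := fun x => by
    have := Real.sqrt_nonneg (a^2 - x^2); linarith
  have hcont : ContinuousOn G (Icc 0 a) := by
    apply Continuous.continuousOn
    apply Continuous.sub
    apply Continuous.add
    · exact (by continuity : Continuous fun s : ℝ => (N^2 + s^2 - a^2)/2).mul
        ((by continuity : Continuous fun s : ℝ => Real.sqrt (a^2 - s^2) + N).log
          (fun x => (hsqrtpos x).ne'))
    · exact (Real.continuous_mul_log.comp (by continuity)).div_const 4
    · exact continuous_const.mul (by continuity)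
  have hderiv : ∀ s ∈ Ioo (0:ℝ) a, HasDerivWithinAt G
      (s * Real.log (1 + N * (a ^ 2 - s ^ 2) ^ (-(1:ℝ)/2))) (Ioi s) s := by
    intro s hs
    obtain ⟨hs0, hsa⟩ := hs
    have hq : 0 < a^2 - s^2 := by nlinarith
    set u := Real.sqrt (a^2 - s^2) with hudef
    have hu : 0 < u := Real.sqrt_pos.2 hq
    have hu2 : u^2 = a^2 - s^2 := Real.sq_sqrt hq.le
    have hqd : HasDerivAt (fun x : ℝ => a^2 - x^2) (-(2*s^1)) s :=
      (hasDerivAt_pow 2 s).const_sub (a^2)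
    have hsq : HasDerivAt (fun x : ℝ => Real.sqrt (a^2 - x^2))
        (-(2*s^1) / (2 * u)) s := hqd.sqrt hq.ne'
    have hlog1 : HasDerivAt (fun x : ℝ => Real.log (Real.sqrt (a^2 - x^2) + N))
        ((-(2*s^1) / (2 * u)) / (u + N)) s := (hsq.add_const N).log (hsqrtpos s).ne'
    have hpoly : HasDerivAt (fun x : ℝ => (N^2 + x^2 - a^2)/2) (2*s^1/2) s := by
      exact (((hasDerivAt_pow 2 s).const_add (N^2)).sub_const (a^2)).div_const 2
    have hterm1 : HasDerivAt (fun x : ℝ =>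
        (N^2 + x^2 - a^2)/2 * Real.log (Real.sqrt (a^2 - x^2) + N))
        (2*s^1/2 * Real.log (u + N)
          + (N^2 + s^2 - a^2)/2 * ((-(2*s^1) / (2 * u)) / (u + N))) s :=
      hpoly.mul hlog1
    have hterm2 : HasDerivAt (fun x : ℝ => (a^2 - x^2) * Real.log (a^2 - x^2) / 4)
        ((-(2*s^1) * Real.log (a^2 - s^2) + (a^2 - s^2) * (-(2*s^1) / (a^2-s^2))) / 4) s := by
      exact (hqd.mul (hqd.log hq.ne')).div_const 4
    have hterm3 : HasDerivAt (fun x : ℝ => N/2 * Real.sqrt (a^2 - x^2))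
        (N/2 * (-(2*s^1) / (2 * u))) s := hsq.const_mul (N/2)
    have hGd : HasDerivAt G
        (2*s^1/2 * Real.log (u + N)
          + (N^2 + s^2 - a^2)/2 * ((-(2*s^1) / (2 * u)) / (u + N))
          + (-(2*s^1) * Real.log (a^2 - s^2) + (a^2 - s^2) * (-(2*s^1) / (a^2-s^2))) / 4
          - N/2 * (-(2*s^1) / (2 * u))) s := (hterm1.add hterm2).sub hterm3
    have heqD : 2*s^1/2 * Real.log (u + N)
          + (N^2 + s^2 - a^2)/2 * ((-(2*s^1) / (2 * u)) / (u + N))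
          + (-(2*s^1) * Real.log (a^2 - s^2) + (a^2 - s^2) * (-(2*s^1) / (a^2-s^2))) / 4
          - N/2 * (-(2*s^1) / (2 * u))
        = s * Real.log (1 + N * (a ^ 2 - s ^ 2) ^ (-(1:ℝ)/2)) := by
      have hqu : (a^2 - s^2) ^ (-(1:ℝ)/2) = u⁻¹ := by
        rw [hudef, Real.sqrt_eq_rpow, neg_div, Real.rpow_neg hq.le]
      have harg : 1 + N * (a^2 - s^2) ^ (-(1:ℝ)/2) = (u + N) / u := by
        rw [hqu]; field_simp
      have hlogq : Real.log (a^2 - s^2) = 2 * Real.log u := by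
        rw [← hu2, Real.log_pow]; norm_num
      rw [harg, Real.log_div (hsqrtpos s).ne' hu.ne', hlogq]
      have hq' : a^2 - s^2 ≠ 0 := hq.ne'
      have hN2 : N^2 + s^2 - a^2 = N^2 - u^2 := by rw [hu2]; ring
      rw [hN2, ← hu2]
      set L1 := Real.log (u + N) with hL1
      set L2 := Real.log u with hL2
      have huN : u + N ≠ 0 := by positivity
      field_simp
      ring_nf
      rw [Real.sqrt_sq hu.le, add_comm N u, ← hL1]
      ring
    exact (heqD ▸ hGd).hasDerivWithinAt
  have hFTC := integral_eq_sub_of_hasDeriv_right_of_le ha.le hcont hderiv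
    (aux_integrable a N ha hN)
  rw [hFTC, hG]
  have h1 : a^2 - a^2 = (0:ℝ) := by ring
  have h2 : a^2 - (0:ℝ)^2 = a^2 := by ring
  simp only [h1, h2, Real.sqrt_zero, Real.log_zero, Real.sqrt_sq ha.le]
  rw [Real.log_pow]
  push_cast
  ring

/-- Eq. (22) of the paper: closed form for the space-normalized capacity of the
two-dimensional terminal deployment, where the channel PSD is
`G(s) = (λ/(4π))·(1/λ² - s²)^{-1/2}` on `0 ≤ s < 1/λ`, and `N = λP̄/(4πN0)`. -/
theorem normalized_capacity_2D (lam Pbar N0 : ℝ)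
    (hlam : 0 < lam) (hP : 0 < Pbar) (hN0 : 0 < N0) :
    let N := lam * Pbar / (4 * π * N0)
    2 * π * (∫ s in (0 : ℝ)..(1 / lam),
        s * Real.log (1 + (Pbar / N0) * ((lam / (4 * π)) * (1 / lam ^ 2 - s ^ 2) ^ (-(1 : ℝ) / 2))))
      = π * (Real.log (1 + lam * N) / lam ^ 2
          + N ^ 2 * Real.log (N * lam / (1 + N * lam)) + N / lam) := by
  intro N
  have hpi : (0:ℝ) < π := Real.pi_pos
  have hN : 0 < N := by
    have : (0:ℝ) < 4 * π * N0 := by positivity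
    exact div_pos (by positivity) this
  have ha : (0:ℝ) < 1 / lam := by positivity
  have hint : (∫ s in (0 : ℝ)..(1 / lam),
        s * Real.log (1 + (Pbar / N0) * ((lam / (4 * π)) * (1 / lam ^ 2 - s ^ 2) ^ (-(1 : ℝ) / 2))))
      = ∫ s in (0 : ℝ)..(1 / lam),
        s * Real.log (1 + N * ((1/lam) ^ 2 - s ^ 2) ^ (-(1 : ℝ) / 2)) := by
    apply intervalIntegral.integral_congr
    intro s _
    have h1 : (1:ℝ) / lam ^ 2 = (1/lam)^2 := by rw [div_pow, one_pow]
    have h2 : Pbar / N0 * (lam / (4 * π) * ((1/lam) ^ 2 - s ^ 2) ^ (-(1 : ℝ) / 2))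
        = N * ((1/lam) ^ 2 - s ^ 2) ^ (-(1 : ℝ) / 2) := by
      show _ = lam * Pbar / (4 * π * N0) * _
      field_simp
    simp only [h1, h2]
  rw [hint, key_integral (1/lam) N ha hN]
  have e1 : (1:ℝ)/lam + N = (1 + lam * N)/lam := by
    field_simp
  have e2 : Real.log ((1 + lam * N)/lam) = Real.log (1 + lam * N) - Real.log lam :=
    Real.log_div (by positivity) hlam.ne'
  have e3 : Real.log ((1:ℝ)/lam) = -Real.log lam := by
    rw [one_div, Real.log_inv]
  have e4 : Real.log (N * lam / (1 + N * lam))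
      = Real.log N + Real.log lam - Real.log (1 + N * lam) := by
    rw [Real.log_div (by positivity) (by positivity), Real.log_mul hN.ne' hlam.ne']
  have e5 : (1 : ℝ) + N * lam = 1 + lam * N := by ring
  rw [e1, e2, e3, e4, e5]
  set L1 := Real.log N
  set L2 := Real.log lam
  set L3 := Real.log (1 + lam * N)
  field_simp
  ring
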